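/- In the 2DistinctSCS instance, {s_1,…,s_n} has a common supersequence of length at most t if and only if the best diff from the source B-values to the target B-values under the family F(U,←), with operation cost κ₀ + κ₁·r where κ₀ = 1 and κ₁ = t+99, has cost at most t + 2n(t+99). -/

import Mathlib

open scoped Classical

/-- An operation of the family `F(U,←)`: a finite union of closed real ranges
`⋃_j [a_j, z_j]` (given as a list of pairs) and a value `b`; the condition is
`A ∈ ⋃_j [a_j, z_j]` and the modifier is the assignment `B ← b`. -/
structure OpUnionAsg where
  ranges : List (ℝ × ℝ)
  b : ℝ

/-- The condition of an operation of `F(U,←)`, evaluated on an `A`-value `v`: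
`v` lies in some range of the union. -/
def OpUnionAsg.cond (f : OpUnionAsg) (v : ℤ) : Prop :=
  ∃ p ∈ f.ranges, p.1 ≤ (v : ℝ) ∧ (v : ℝ) ≤ p.2

/-- Applying an operation of `F(U,←)`: every key whose `A`-value lies in the union gets
its `B`-value replaced by `b`; other keys are unchanged. -/
noncomputable def OpUnionAsg.apply {K : Type*} (α : K → ℤ) (f : OpUnionAsg) (β : K → ℝ) :
    K → ℝ :=
  fun k => if f.cond (α k) then f.b else β k

/-- Successive application of a finite sequence of operations of `F(U,←)`. -/
noncomputable def applyOpsUnionAsg {K : Type*} (α : K → ℤ) (L : List OpUnionAsg)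
    (β : K → ℝ) : K → ℝ :=
  L.foldl (fun β' f => f.apply α β') β

/-- `L` is a diff from `βS` to `βT` under `F(U,←)`. -/
def IsDiffUnionAsg {K : Type*} (α : K → ℤ) (L : List OpUnionAsg) (βS βT : K → ℝ) : Prop :=
  applyOpsUnionAsg α L βS = βT

/-- `A`-values of the 2DistinctSCS instance on the key set `{0,…,5n+1}`:
the keys `5k` and `5k+1` have `A`-value `4k` (for `0 ≤ k ≤ n`), and the keys
`5k-3, 5k-2, 5k-1` have `A`-values `4k-3, 4k-2, 4k-1` (for `1 ≤ k ≤ n`). -/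
def scsAlpha (n : ℕ) : Fin (5 * n + 2) → ℤ :=
  fun j => ((4 * ((j : ℕ) / 5) + (if (j : ℕ) % 5 ≤ 1 then 0 else (j : ℕ) % 5 - 1) : ℕ) : ℤ)

/-- Source `B`-values of the 2DistinctSCS instance: `-1` at keys `5k`, `-2` at keys
`5k+1`, and `0` at the keys `5k-3, 5k-2, 5k-1`. -/
def scsBS (n : ℕ) : Fin (5 * n + 2) → ℝ :=
  fun j => if (j : ℕ) % 5 = 0 then -1 else if (j : ℕ) % 5 = 1 then -2 else 0

/-- Target `B`-values of the 2DistinctSCS instance with symbols `u k, v k` of the string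
`s_k`: `-1` at keys `5k`, `-2` at keys `5k+1`, and `u k, v k, u k` at the keys
`5k-3, 5k-2, 5k-1` respectively. -/
noncomputable def scsBT (n : ℕ) (u v : ℕ → ℤ) : Fin (5 * n + 2) → ℝ :=
  fun j =>
    if (j : ℕ) % 5 = 0 then -1
    else if (j : ℕ) % 5 = 1 then -2
    else if (j : ℕ) % 5 = 3 then (v ((j : ℕ) / 5 + 1) : ℝ)
    else (u ((j : ℕ) / 5 + 1) : ℝ)

/-- The cost of a diff under `F(U,←)` with per-operation cost `κ₀ + κ₁·r`, where `r` is
the number of ranges in the operation's condition. -/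
def diffCostUnionAsg (κ₀ κ₁ : ℕ) (L : List OpUnionAsg) : ℕ :=
  (L.map fun f => κ₀ + κ₁ * f.ranges.length).sum

/-- `L` is a best diff from `βS` to `βT` under `F(U,←)` with the given cost parameters. -/
def IsBestDiffUnionAsg {K : Type*} (κ₀ κ₁ : ℕ) (α : K → ℤ) (L : List OpUnionAsg)
    (βS βT : K → ℝ) : Prop :=
  IsDiffUnionAsg α L βS βT ∧
    ∀ L' : List OpUnionAsg, IsDiffUnionAsg α L' βS βT →
      diffCostUnionAsg κ₀ κ₁ L ≤ diffCostUnionAsg κ₀ κ₁ L'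


namespace SCSP

variable {K : Type*}

lemma applyOps_nil (α : K → ℤ) (β : K → ℝ) : applyOpsUnionAsg α [] β = β := rfl

lemma applyOps_cons (α : K → ℤ) (f : OpUnionAsg) (L : List OpUnionAsg) (β : K → ℝ) :
    applyOpsUnionAsg α (f :: L) β = applyOpsUnionAsg α L (f.apply α β) := rfl

lemma applyOps_append (α : K → ℤ) (L1 L2 : List OpUnionAsg) (β : K → ℝ) :
    applyOpsUnionAsg α (L1 ++ L2) β = applyOpsUnionAsg α L2 (applyOpsUnionAsg α L1 β) :=
  List.foldl_append

lemma applyOps_eq_self (α : K → ℤ) (L : List OpUnionAsg) (β : K → ℝ) (k : K)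
    (h : ∀ f ∈ L, ¬ f.cond (α k)) : applyOpsUnionAsg α L β k = β k := by
  induction L generalizing β with
  | nil => rfl
  | cons f L ih =>
    rw [applyOps_cons, ih _ (fun g hg => h g (List.mem_cons_of_mem _ hg))]
    simp [OpUnionAsg.apply, h f List.mem_cons_self]

lemma applyOps_eq_of_alpha_eq (α : K → ℤ) (L : List OpUnionAsg) (β : K → ℝ) (k1 k2 : K)
    (ha : α k1 = α k2) (hb : β k1 = β k2) :
    applyOpsUnionAsg α L β k1 = applyOpsUnionAsg α L β k2 := by
  induction L generalizing β with
  | nil => exact hb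
  | cons f L ih =>
    exact ih _ (by simp [OpUnionAsg.apply, ha, hb])

lemma applyOps_last (α : K → ℤ) (L1 L2 : List OpUnionAsg) (f : OpUnionAsg) (β : K → ℝ)
    (k : K) (hc : f.cond (α k)) (h2 : ∀ g ∈ L2, ¬ g.cond (α k)) :
    applyOpsUnionAsg α (L1 ++ f :: L2) β k = f.b := by
  rw [applyOps_append, applyOps_cons, applyOps_eq_self _ _ _ _ h2]
  simp [OpUnionAsg.apply, hc]

lemma applyOps_getLast (α : K → ℤ) (L : List OpUnionAsg) (β : K → ℝ) (k : K) (i : ℕ)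
    (hi : i < L.length) (hc : (L[i]).cond (α k))
    (hmax : ∀ j (hj : j < L.length), i < j → ¬ (L[j]).cond (α k)) :
    applyOpsUnionAsg α L β k = (L[i]).b := by
  conv_lhs => rw [← List.take_append_drop i L, List.drop_eq_getElem_cons hi]
  refine applyOps_last _ _ _ _ _ _ hc ?_
  intro g hg
  obtain ⟨m, hm, rfl⟩ := List.mem_iff_getElem.1 hg
  rw [List.getElem_drop]
  exact hmax _ (by simp at hm; omega) (by omega)

lemma exists_last_cover (α : K → ℤ) (L : List OpUnionAsg) (k : K)
    (h : ∃ f ∈ L, f.cond (α k)) :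
    ∃ i, ∃ hi : i < L.length, (L[i]).cond (α k) ∧
      ∀ j (hj : j < L.length), i < j → ¬ (L[j]).cond (α k) := by
  obtain ⟨f, hf, hfc⟩ := h
  obtain ⟨i0, hi0, rfl⟩ := List.mem_iff_getElem.1 hf
  set P : ℕ → Prop := fun i => ∃ hi : i < L.length, (L[i]).cond (α k) with hP
  have hPi0 : P i0 := ⟨hi0, hfc⟩
  have hspec : P (Nat.findGreatest P L.length) :=
    Nat.findGreatest_spec (le_of_lt hi0) hPi0
  obtain ⟨hlt, hcond⟩ := hspec
  refine ⟨Nat.findGreatest P L.length, hlt, hcond, fun j hj hgt hcj => ?_⟩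
  exact Nat.findGreatest_is_greatest hgt (le_of_lt hj) ⟨hj, hcj⟩

lemma cost_eq (κ : ℕ) (L : List OpUnionAsg) :
    diffCostUnionAsg 1 κ L = L.length + κ * (L.map (fun f => f.ranges.length)).sum := by
  induction L with
  | nil => rfl
  | cons f L ih =>
    simp only [diffCostUnionAsg, List.map_cons, List.sum_cons] at *
    rw [ih]; simp [List.length_cons]; ring



lemma getElem_drop' {A : Type*} (l : List A) (i j : ℕ) (hij : i ≤ j) (hj : j < l.length) :
    (l.drop i)[j - i]'(by simp; omega) = l[j] := by
  simp only [List.getElem_drop]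
  congr 1
  omega

lemma getElem_mem_drop {A : Type*} (l : List A) (i j : ℕ) (hij : i < j) (hj : j < l.length) :
    l[j] ∈ l.drop (i+1) := by
  rw [← getElem_drop' l (i+1) j (by omega) hj]
  exact List.getElem_mem _

lemma sum_split_at {l : List ℕ} {i : ℕ} (hi : i < l.length) :
    l.sum = (l.take i).sum + l[i] + (l.drop (i+1)).sum := by
  conv_lhs => rw [← List.take_append_drop i l, List.drop_eq_getElem_cons hi]
  rw [List.sum_append, List.sum_cons]
  omega

lemma sum_two_le (l : List ℕ) (i j : ℕ) (hij : i < j) (hj : j < l.length) :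
    l[i]'(by omega) + l[j] ≤ l.sum := by
  rw [sum_split_at (show i < l.length by omega)]
  have : l[j] ≤ (l.drop (i+1)).sum := List.le_sum_of_mem (getElem_mem_drop l i j hij hj)
  omega

lemma sum_three_le (l : List ℕ) (i j k : ℕ) (hij : i < j) (hjk : j < k) (hk : k < l.length) :
    l[i]'(by omega) + l[j]'(by omega) + l[k] ≤ l.sum := by
  rw [sum_split_at (show i < l.length by omega)]
  have h2 : (l.drop (i+1))[j - (i+1)]'(by simp; omega) +
      (l.drop (i+1))[k - (i+1)]'(by simp; omega) ≤ (l.drop (i+1)).sum :=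
    sum_two_le _ _ _ (by omega) (by simp; omega)
  rw [getElem_drop' l (i+1) j (by omega) (by omega),
      getElem_drop' l (i+1) k (by omega) hk] at h2
  omega

lemma list_range_map_sum (f : ℕ → ℕ) (n : ℕ) :
    ((List.range n).map f).sum = ∑ i ∈ Finset.range n, f i := by
  induction n with
  | zero => simp
  | succ n ih => rw [List.range_succ]; simp [Finset.sum_range_succ, ih]

lemma length_filter_eq {A : Type*} (l : List A) (g : A → Bool) :
    (l.filter g).length = (l.map (fun a => if g a then 1 else 0)).sum := by
  induction l with
  | nil => simp
  | cons a l ih =>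
    rw [List.filter_cons]
    split <;> simp [ih, *] <;> omega

lemma sum_comm_list {A B : Type*} (l : List A) (s : Finset B) (g : A → B → ℕ) :
    ∑ b ∈ s, (l.map (fun a => g a b)).sum = (l.map (fun a => ∑ b ∈ s, g a b)).sum := by
  induction l with
  | nil => simp
  | cons a l ih => simp [Finset.sum_add_distrib, ih]

lemma pair_sublist_of (w : List ℤ) (i j : ℕ) (hij : i < j) (hj : j < w.length) :
    [w.getD i 0, w.getD j 0].Sublist w := by
  have hi : i < w.length := by omega
  rw [List.getD_eq_getElem w 0 hi, List.getD_eq_getElem w 0 hj]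
  have h1 : List.Sublist [w[j]] (w.drop (i+1)) :=
    List.singleton_sublist.2 (getElem_mem_drop w i j hij hj)
  have h2 : List.Sublist [w[i], w[j]] (w[i] :: w.drop (i+1)) := h1.cons₂ _
  have h3 : w[i] :: w.drop (i+1) = w.drop i := (List.drop_eq_getElem_cons hi).symm
  exact (h3 ▸ h2).trans (List.drop_sublist i w)

lemma exists_of_pair_sublist {a b : ℤ} {w : List ℤ} (h : [a, b].Sublist w) :
    ∃ i j, i < j ∧ j < w.length ∧ w.getD i 0 = a ∧ w.getD j 0 = b := by
  induction w with
  | nil => simp at h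
  | cons x w ih =>
    cases h with
    | cons _ h =>
      obtain ⟨i, j, hij, hj, ha, hb⟩ := ih h
      exact ⟨i+1, j+1, by omega, by simp; omega, by simpa using ha, by simpa using hb⟩
    | cons_cons _ h =>
      have hb : b ∈ w := List.singleton_sublist.1 h
      obtain ⟨j, hj, rfl⟩ := List.mem_iff_getElem.1 hb
      exact ⟨0, j+1, by omega, by simp; omega, by simp,
        by rw [List.getD_cons_succ, List.getD_eq_getElem w 0 hj]⟩


def cov (p : ℝ × ℝ) (a : ℤ) : Prop := p.1 ≤ (a : ℝ) ∧ (a : ℝ) ≤ p.2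

lemma cov_between {p : ℝ × ℝ} {a b c : ℤ} (hab : a ≤ b) (hbc : b ≤ c)
    (ha : cov p a) (hc : cov p c) : cov p b :=
  ⟨ha.1.trans (by exact_mod_cast hab), (show (b:ℝ) ≤ (c:ℝ) by exact_mod_cast hbc).trans hc.2⟩

def touches (p : ℝ × ℝ) (k : ℕ) : Prop := ∃ a : ℤ, 4*(k:ℤ)+1 ≤ a ∧ a ≤ 4*(k:ℤ)+3 ∧ cov p a

noncomputable def tcOp (f : OpUnionAsg) (k : ℕ) : ℕ :=
  (f.ranges.map (fun p => if touches p k then 1 else 0)).sum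

noncomputable def tc (L : List OpUnionAsg) (k : ℕ) : ℕ := (L.map (fun f => tcOp f k)).sum

lemma one_le_tcOp {f : OpUnionAsg} {k : ℕ} {a : ℤ} (h1 : 4*(k:ℤ)+1 ≤ a) (h2 : a ≤ 4*(k:ℤ)+3)
    (hc : f.cond a) : 1 ≤ tcOp f k := by
  obtain ⟨p, hp, hcov⟩ := hc
  have ht : touches p k := ⟨a, h1, h2, hcov⟩
  have hm : (1:ℕ) ∈ f.ranges.map (fun p => if touches p k then 1 else 0) :=
    List.mem_map.2 ⟨p, hp, by simp [ht]⟩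
  exact List.le_sum_of_mem hm

lemma sum_two_mem_le {A : Type*} (l : List A) (g : A → ℕ) (p q : A) (hp : p ∈ l) (hq : q ∈ l)
    (hne : p ≠ q) : g p + g q ≤ (l.map g).sum := by
  obtain ⟨ip, hip, rfl⟩ := List.mem_iff_getElem.1 hp
  obtain ⟨iq, hiq, rfl⟩ := List.mem_iff_getElem.1 hq
  have hne' : ip ≠ iq := by rintro rfl; exact hne rfl
  rcases Nat.lt_or_ge ip iq with h | h
  · have := sum_two_le (l.map g) ip iq h (by simpa using hiq)
    simpa using this
  · have hlt : iq < ip := by omega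
    have := sum_two_le (l.map g) iq ip hlt (by simpa using hip)
    simp at this; omega

lemma touches_unique {p : ℝ × ℝ} {n : ℕ} (hsep : ∀ k : ℕ, k ≤ n → ¬ cov p (4*(k:ℤ)))
    {k k' : ℕ} (hk : k < n) (hk' : k' < n) (ht : touches p k) (ht' : touches p k') : k = k' := by
  by_contra hne
  wlog h : k < k' generalizing k k'
  · exact this hk' hk ht' ht (Ne.symm hne) (by omega)
  obtain ⟨a, ha1, ha2, hca⟩ := ht
  obtain ⟨a', hb1, hb2, hcb⟩ := ht'
  have hc : cov p (4*((k+1:ℕ):ℤ)) :=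
    cov_between (b := 4*((k+1:ℕ):ℤ)) (by push_cast; omega) (by push_cast; omega) hca hcb
  exact hsep (k+1) (by omega) hc

lemma tc_sum_le_rc (n : ℕ) (L : List OpUnionAsg)
    (hsep : ∀ f ∈ L, ∀ k : ℕ, k ≤ n → ¬ f.cond (4*(k:ℤ))) :
    ∑ k ∈ Finset.range n, tc L k ≤ (L.map (fun f => f.ranges.length)).sum := by
  unfold tc
  rw [sum_comm_list]
  refine List.sum_le_sum ?_
  intro f hf
  unfold tcOp
  rw [sum_comm_list]
  have hlen : f.ranges.length = (f.ranges.map (fun _ => 1)).sum := by simp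
  rw [hlen]
  refine List.sum_le_sum ?_
  intro p hp
  have hsep' : ∀ k : ℕ, k ≤ n → ¬ cov p (4*(k:ℤ)) := by
    intro k hk hc
    exact hsep f hf k hk ⟨p, hp, hc⟩
  -- at most one k in range n touches p
  rcases Classical.em (∃ k < n, touches p k) with ⟨k0, hk0, ht0⟩ | hnone
  · have : ∀ k ∈ Finset.range n, (if touches p k then (1:ℕ) else 0) ≤ if k = k0 then 1 else 0 := by
      intro k hk
      rcases Classical.em (touches p k) with h | h
      · rw [if_pos h, if_pos (touches_unique hsep' (Finset.mem_range.1 hk) hk0 h ht0)]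
      · simp [h]
    calc ∑ k ∈ Finset.range n, (if touches p k then (1:ℕ) else 0)
        ≤ ∑ k ∈ Finset.range n, (if k = k0 then (1:ℕ) else 0) := Finset.sum_le_sum this
      _ ≤ 1 := by rw [Finset.sum_ite_eq' (Finset.range n) k0 (fun _ => (1:ℕ))]; split <;> omega
  · have : ∀ k ∈ Finset.range n, (if touches p k then (1:ℕ) else 0) = 0 := by
      intro k hk
      rw [if_neg]
      exact fun h => hnone ⟨k, Finset.mem_range.1 hk, h⟩
    rw [Finset.sum_congr rfl this]
    simp

lemma alpha_eval (n k r : ℕ) (hr : 2 ≤ r) (hr5 : r < 5) (h : 5*k+r < 5*n+2) :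
    scsAlpha n ⟨5*k+r, h⟩ = 4*(k:ℤ) + (r:ℤ) - 1 := by
  have h1 : (5*k+r)/5 = k := by omega
  have h2 : (5*k+r)%5 = r := by omega
  simp only [scsAlpha, h1, h2]
  rw [if_neg (by omega)]
  omega

lemma alpha_eval_sep (n k r : ℕ) (hr5 : r ≤ 1) (h : 5*k+r < 5*n+2) :
    scsAlpha n ⟨5*k+r, h⟩ = 4*(k:ℤ) := by
  have h1 : (5*k+r)/5 = k := by omega
  have h2 : (5*k+r)%5 = r := by omega
  simp only [scsAlpha, h1, h2]
  rw [if_pos (by omega)]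
  push_cast
  ring

lemma bs_eval (n k r : ℕ) (hr : 2 ≤ r) (hr5 : r < 5) (h : 5*k+r < 5*n+2) :
    scsBS n ⟨5*k+r, h⟩ = 0 := by
  have h2 : (5*k+r)%5 = r := by omega
  simp only [scsBS, h2]
  rw [if_neg (by omega), if_neg (by omega)]

lemma bt_eval (n : ℕ) (u v : ℕ → ℤ) (k r : ℕ) (hr : 2 ≤ r) (hr5 : r < 5) (h : 5*k+r < 5*n+2) :
    scsBT n u v ⟨5*k+r, h⟩ = if r = 3 then (v (k+1) : ℝ) else (u (k+1) : ℝ) := by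
  have h1 : (5*k+r)/5 = k := by omega
  have h2 : (5*k+r)%5 = r := by omega
  simp only [scsBT, h1, h2]
  rw [if_neg (by omega), if_neg (by omega)]

lemma bt_eval_sep (n : ℕ) (u v : ℕ → ℤ) (k r : ℕ) (hr5 : r ≤ 1) (h : 5*k+r < 5*n+2) :
    scsBT n u v ⟨5*k+r, h⟩ = scsBS n ⟨5*k+r, h⟩ := by
  have h2 : (5*k+r)%5 = r := by omega
  simp only [scsBT, scsBS, h2]
  rcases Nat.le_one_iff_eq_zero_or_eq_one.1 hr5 with h | h <;> simp [h]

lemma diff_no_sep (n : ℕ) (u v : ℕ → ℤ) (L : List OpUnionAsg)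
    (hdiff : IsDiffUnionAsg (scsAlpha n) L (scsBS n) (scsBT n u v))
    (f : OpUnionAsg) (hf : f ∈ L) (k : ℕ) (hk : k ≤ n) : ¬ f.cond (4*(k:ℤ)) := by
  intro hc
  obtain ⟨L1, L2, rfl⟩ := List.append_of_mem hf
  have hD : ∀ j, applyOpsUnionAsg (scsAlpha n) (L1 ++ f :: L2) (scsBS n) j = scsBT n u v j :=
    fun j => congrFun hdiff j
  have hj1 : 5*k+0 < 5*n+2 := by omega
  have hj2 : 5*k+1 < 5*n+2 := by omega
  set j1 : Fin (5*n+2) := ⟨5*k+0, hj1⟩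
  set j2 : Fin (5*n+2) := ⟨5*k+1, hj2⟩
  have hα1 : scsAlpha n j1 = 4*(k:ℤ) := alpha_eval_sep n k 0 (by omega) hj1
  have hα2 : scsAlpha n j2 = 4*(k:ℤ) := alpha_eval_sep n k 1 (by omega) hj2
  have heq : applyOpsUnionAsg (scsAlpha n) (L1 ++ f :: L2) (scsBS n) j1
      = applyOpsUnionAsg (scsAlpha n) (L1 ++ f :: L2) (scsBS n) j2 := by
    rw [applyOps_append, applyOps_cons]
    refine applyOps_eq_of_alpha_eq _ _ _ _ _ (hα1.trans hα2.symm) ?_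
    simp only [OpUnionAsg.apply, hα1, hα2, hc, if_pos]
  rw [hD j1, hD j2] at heq
  have e1 : scsBT n u v j1 = -1 := by
    have h2 : (5*k+0)%5 = 0 := by omega
    simp [scsBT, j1, h2]
  have e2 : scsBT n u v j2 = -2 := by
    have h2 : (5*k+1)%5 = 1 := by omega
    simp [scsBT, j2, h2]
  rw [e1, e2] at heq
  norm_num at heq

lemma key_last (n : ℕ) (u v : ℕ → ℤ) (L : List OpUnionAsg)
    (hdiff : IsDiffUnionAsg (scsAlpha n) L (scsBS n) (scsBT n u v))
    (k r : ℕ) (hr : 2 ≤ r) (hr5 : r < 5) (hk : k < n)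
    (hne : (if r = 3 then (v (k+1) : ℝ) else (u (k+1) : ℝ)) ≠ 0) :
    ∃ i, ∃ hi : i < L.length, (L[i]).cond (4*(k:ℤ) + (r:ℤ) - 1) ∧
      (∀ j (hj : j < L.length), i < j → ¬ (L[j]).cond (4*(k:ℤ)+(r:ℤ)-1)) ∧
      (L[i]).b = (if r = 3 then (v (k+1) : ℝ) else (u (k+1) : ℝ)) := by
  have hj : 5*k+r < 5*n+2 := by omega
  set j1 : Fin (5*n+2) := ⟨5*k+r, hj⟩ with hj1def
  have hα : scsAlpha n j1 = 4*(k:ℤ)+(r:ℤ)-1 := alpha_eval n k r hr hr5 hj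
  have hD : applyOpsUnionAsg (scsAlpha n) L (scsBS n) j1 = scsBT n u v j1 := congrFun hdiff j1
  have hT := bt_eval n u v k r hr hr5 hj
  have hcov : ∃ f ∈ L, f.cond (scsAlpha n j1) := by
    by_contra h
    push_neg at h
    have h0 := applyOps_eq_self (scsAlpha n) L (scsBS n) j1 h
    rw [hD, hT, bs_eval n k r hr hr5 hj] at h0
    exact hne h0
  obtain ⟨i, hi, hc, hmax⟩ := exists_last_cover _ _ _ hcov
  have h0 := applyOps_getLast (scsAlpha n) L (scsBS n) j1 i hi hc hmax
  rw [hα] at hc hmax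
  refine ⟨i, hi, hc, hmax, ?_⟩
  rw [← h0, hD, hT]

lemma sum_three_distinct_le (l : List ℕ) (i j k : ℕ) (hi : i < l.length) (hj : j < l.length)
    (hk : k < l.length) (hij : i ≠ j) (hjk : j ≠ k) (hik : i ≠ k)
    (h1 : 1 ≤ l[i]) (h2 : 1 ≤ l[j]) (h3 : 1 ≤ l[k]) : 3 ≤ l.sum := by
  have H : ∀ a b c : ℕ, ∀ hab : a < b, ∀ hbc : b < c, ∀ hc : c < l.length,
      1 ≤ l[a]'(by omega) → 1 ≤ l[b]'(by omega) → 1 ≤ l[c] → 3 ≤ l.sum := by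
    intro a b c hab hbc hc ha hb hc'
    have := sum_three_le l a b c hab hbc hc
    omega
  rcases lt_trichotomy i j with h | h | h
  · rcases lt_trichotomy j k with h' | h' | h'
    · exact H i j k h h' hk h1 h2 h3
    · exact absurd h' hjk
    · rcases lt_trichotomy i k with h'' | h'' | h''
      · exact H i k j h'' h' hj h1 h3 h2
      · exact absurd h'' hik
      · exact H k i j h'' h hj h3 h1 h2
  · exact absurd h hij
  · rcases lt_trichotomy i k with h' | h' | h'
    · exact H j i k h h' hk h2 h1 h3
    · exact absurd h' hik
    · rcases lt_trichotomy j k with h'' | h'' | h''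
      · exact H j k i h'' h' hi h2 h3 h1
      · exact absurd h'' hjk
      · exact H k j i h'' h hi h3 h2 h1

lemma tcOp_sum_le (L : List OpUnionAsg) (k : ℕ) (i1 i2 : ℕ) (hi1 : i1 < L.length)
    (hi2 : i2 < L.length) (hne : i1 ≠ i2) :
    tcOp (L[i1]) k + tcOp (L[i2]) k ≤ tc L k := by
  unfold tc
  rcases Nat.lt_or_ge i1 i2 with h | h
  · have := sum_two_le (L.map (fun f => tcOp f k)) i1 i2 h (by simpa using hi2)
    simpa using this
  · have := sum_two_le (L.map (fun f => tcOp f k)) i2 i1 (by omega) (by simpa using hi1)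
    simp at this; omega

lemma block_tc_two_le (n : ℕ) (u v : ℕ → ℤ) (L : List OpUnionAsg)
    (hdiff : IsDiffUnionAsg (scsAlpha n) L (scsBS n) (scsBT n u v)) (k : ℕ) (hk : k < n)
    (hu' : 0 < u (k+1)) (hv' : 0 < v (k+1)) (huv' : u (k+1) ≠ v (k+1)) :
    2 ≤ tc L k := by
  obtain ⟨i1, hi1, hc1, hmax1, hb1⟩ := key_last n u v L hdiff k 2 (by norm_num) (by norm_num) hk
    (by norm_num; exact_mod_cast hu'.ne')
  obtain ⟨i2, hi2, hc2, hmax2, hb2⟩ := key_last n u v L hdiff k 3 (by norm_num) (by norm_num) hk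
    (by norm_num; exact_mod_cast hv'.ne')
  norm_num at hb1 hb2
  have hne : i1 ≠ i2 := by
    rintro rfl
    rw [hb1] at hb2
    exact huv' (by exact_mod_cast hb2)
  have t1 : 1 ≤ tcOp (L[i1]) k := one_le_tcOp (a := 4*(k:ℤ)+2-1) (by omega) (by omega)
    (by convert hc1 using 2 <;> (push_cast; ring))
  have t2 : 1 ≤ tcOp (L[i2]) k := one_le_tcOp (a := 4*(k:ℤ)+3-1) (by omega) (by omega)
    (by convert hc2 using 2 <;> (push_cast; ring))
  have := tcOp_sum_le L k i1 i2 hi1 hi2 hne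
  omega

lemma block_struct (n : ℕ) (u v : ℕ → ℤ) (L : List OpUnionAsg)
    (hdiff : IsDiffUnionAsg (scsAlpha n) L (scsBS n) (scsBT n u v)) (k : ℕ) (hk : k < n)
    (hu' : 0 < u (k+1)) (hv' : 0 < v (k+1)) (huv' : u (k+1) ≠ v (k+1)) (htc : tc L k ≤ 2) :
    ∃ i j, ∃ hij : i < j, ∃ hj : j < L.length, (L[i]'(by omega)).b = ((u (k+1)) : ℝ) ∧
      (L[j]).b = ((v (k+1)) : ℝ) := by
  obtain ⟨i1, hi1, hc1, hmax1, hb1⟩ := key_last n u v L hdiff k 2 (by norm_num) (by norm_num) hk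
    (by norm_num; exact_mod_cast hu'.ne')
  obtain ⟨i2, hi2, hc2, hmax2, hb2⟩ := key_last n u v L hdiff k 3 (by norm_num) (by norm_num) hk
    (by norm_num; exact_mod_cast hv'.ne')
  obtain ⟨i3, hi3, hc3, hmax3, hb3⟩ := key_last n u v L hdiff k 4 (by norm_num) (by norm_num) hk
    (by norm_num; exact_mod_cast hu'.ne')
  norm_num at hb1 hb2 hb3
  have e1 : 4*(k:ℤ)+((2:ℕ):ℤ)-1 = 4*(k:ℤ)+1 := by push_cast; ring
  have e2 : 4*(k:ℤ)+((3:ℕ):ℤ)-1 = 4*(k:ℤ)+2 := by push_cast; ring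
  have e3 : 4*(k:ℤ)+((4:ℕ):ℤ)-1 = 4*(k:ℤ)+3 := by push_cast; ring
  rw [e1] at hc1 hmax1
  rw [e2] at hc2 hmax2
  rw [e3] at hc3 hmax3
  have t1 : 1 ≤ tcOp (L[i1]) k := one_le_tcOp (by omega) (by omega : (4*(k:ℤ)+1) ≤ 4*(k:ℤ)+3) hc1
  have t2 : 1 ≤ tcOp (L[i2]) k := one_le_tcOp (by omega) (by omega) hc2
  have t3 : 1 ≤ tcOp (L[i3]) k := one_le_tcOp (by omega) (by omega) hc3
  have h12 : i1 ≠ i2 := by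
    rintro rfl
    rw [hb1] at hb2
    exact huv' (by exact_mod_cast hb2)
  have h23 : i2 ≠ i3 := by
    rintro rfl
    rw [hb3] at hb2
    exact huv' (by exact_mod_cast hb2)
  have h13 : i1 = i3 := by
    by_contra hne
    have h3 : 3 ≤ tc L k := by
      unfold tc
      refine sum_three_distinct_le (L.map (fun f => tcOp f k)) i1 i2 i3
        (by simpa using hi1) (by simpa using hi2) (by simpa using hi3) h12 h23 hne
        (by simpa using t1) (by simpa using t2) (by simpa using t3)
    omega
  subst h13
  rcases Nat.lt_or_ge i1 i2 with hlt | hge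
  · exact ⟨i1, i2, hlt, hi2, hb1, hb2⟩
  · exfalso
    have hlt : i2 < i1 := by omega
    have htcOp1 : tcOp (L[i1]) k ≤ 1 := by
      have := tcOp_sum_le L k i1 i2 hi1 hi2 h12
      omega
    obtain ⟨p, hp, hcp⟩ := hc1
    obtain ⟨q, hq, hcq⟩ := hc3
    have hpq : p = q := by
      by_contra hpqne
      have tp : touches p k := ⟨4*(k:ℤ)+1, by omega, by omega, hcp⟩
      have tq : touches q k := ⟨4*(k:ℤ)+3, by omega, by omega, hcq⟩
      have h0 := sum_two_mem_le (L[i1]).ranges (fun p => if touches p k then 1 else 0) p q hp hq hpqne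
      have h' : (if touches p k then (1:ℕ) else 0) + (if touches q k then (1:ℕ) else 0)
          ≤ tcOp (L[i1]) k := h0
      rw [if_pos tp, if_pos tq] at h'
      omega
    subst hpq
    have hcov2 : cov p (4*(k:ℤ)+2) := cov_between (by omega) (by omega) hcp hcq
    exact hmax2 i1 hi1 hlt ⟨p, hp, hcov2⟩

noncomputable def conOp (p q : ℕ → ℕ) (n : ℕ) (w : List ℤ) (i : ℕ) : OpUnionAsg :=
  ⟨(((List.range n).filter (fun k => p k = i)).map (fun (k : ℕ) => ((4*(k:ℝ)+1, 4*(k:ℝ)+3) : ℝ × ℝ))) ++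
   (((List.range n).filter (fun k => q k = i)).map (fun (k : ℕ) => ((4*(k:ℝ)+2, 4*(k:ℝ)+2) : ℝ × ℝ))),
   ((w.getD i 0 : ℤ) : ℝ)⟩

noncomputable def conL (p q : ℕ → ℕ) (n : ℕ) (w : List ℤ) : List OpUnionAsg :=
  (List.range w.length).map (conOp p q n w)

lemma conOp_cond (p q : ℕ → ℕ) (n : ℕ) (w : List ℤ) (i : ℕ) (a : ℤ) :
    (conOp p q n w i).cond a ↔
      ((∃ k, k < n ∧ p k = i ∧ 4*(k:ℤ)+1 ≤ a ∧ a ≤ 4*(k:ℤ)+3) ∨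
       (∃ k, k < n ∧ q k = i ∧ a = 4*(k:ℤ)+2)) := by
  constructor
  · rintro ⟨pr, hpr, h1, h2⟩
    rcases List.mem_append.1 hpr with hm | hm
    · obtain ⟨k, hkf, rfl⟩ := List.mem_map.1 hm
      have hk := List.mem_filter.1 hkf
      refine Or.inl ⟨k, List.mem_range.1 hk.1, by simpa using hk.2, ?_, ?_⟩
      · have h1' : (4*(k:ℝ)+1) ≤ (a:ℝ) := h1
        exact_mod_cast h1'
      · have h2' : (a:ℝ) ≤ 4*(k:ℝ)+3 := h2
        exact_mod_cast h2'
    · obtain ⟨k, hkf, rfl⟩ := List.mem_map.1 hm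
      have hk := List.mem_filter.1 hkf
      refine Or.inr ⟨k, List.mem_range.1 hk.1, by simpa using hk.2, ?_⟩
      have h1'' : (4*(k:ℝ)+2) ≤ (a:ℝ) := h1
      have h2'' : (a:ℝ) ≤ 4*(k:ℝ)+2 := h2
      have h1' : 4*(k:ℤ)+2 ≤ a := by exact_mod_cast h1''
      have h2' : a ≤ 4*(k:ℤ)+2 := by exact_mod_cast h2''
      omega
  · rintro (⟨k, hk, hpk, h1, h2⟩ | ⟨k, hk, hqk, rfl⟩)
    · refine ⟨(4*(k:ℝ)+1, 4*(k:ℝ)+3), List.mem_append_left _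
        (List.mem_map.2 ⟨k, List.mem_filter.2 ⟨List.mem_range.2 hk, by simpa using hpk⟩, rfl⟩),
        ?_, ?_⟩
      · show (4*(k:ℝ)+1) ≤ (a:ℝ)
        exact_mod_cast h1
      · show (a:ℝ) ≤ 4*(k:ℝ)+3
        exact_mod_cast h2
    · refine ⟨(4*(k:ℝ)+2, 4*(k:ℝ)+2), List.mem_append_right _
        (List.mem_map.2 ⟨k, List.mem_filter.2 ⟨List.mem_range.2 hk, by simpa using hqk⟩, rfl⟩),
        ?_, ?_⟩
      · show (4*(k:ℝ)+2) ≤ ((4*(k:ℤ)+2 : ℤ):ℝ)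
        exact le_of_eq (by push_cast; ring)
      · show ((4*(k:ℤ)+2 : ℤ):ℝ) ≤ 4*(k:ℝ)+2
        exact le_of_eq (by push_cast; ring)

lemma conL_length (p q : ℕ → ℕ) (n : ℕ) (w : List ℤ) : (conL p q n w).length = w.length := by
  simp [conL]

lemma conL_get (p q : ℕ → ℕ) (n : ℕ) (w : List ℤ) (i : ℕ) (hi : i < (conL p q n w).length) :
    (conL p q n w)[i] = conOp p q n w i := by
  simp [conL]

lemma sum_filter_count (m n : ℕ) (p : ℕ → ℕ) (hp : ∀ k < n, p k < m) :
    ∑ i ∈ Finset.range m, ((List.range n).filter (fun k => p k = i)).length = n := by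
  have h1 : ∀ i : ℕ, ((List.range n).filter (fun k => p k = i)).length
      = ∑ k ∈ Finset.range n, if p k = i then 1 else 0 := by
    intro i
    rw [length_filter_eq, list_range_map_sum]
    exact Finset.sum_congr rfl (fun k _ => by simp)
  rw [Finset.sum_congr rfl (fun i _ => h1 i), Finset.sum_comm]
  have h2 : ∀ k ∈ Finset.range n, (∑ i ∈ Finset.range m, if p k = i then (1:ℕ) else 0) = 1 := by
    intro k hk
    rw [Finset.sum_ite_eq (Finset.range m) (p k) (fun _ => (1:ℕ)),
      if_pos (Finset.mem_range.2 (hp k (Finset.mem_range.1 hk)))]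
  rw [Finset.sum_congr rfl h2]
  simp

lemma conL_rsum (p q : ℕ → ℕ) (n : ℕ) (w : List ℤ)
    (hp : ∀ k < n, p k < w.length) (hq : ∀ k < n, q k < w.length) :
    ((conL p q n w).map (fun f => f.ranges.length)).sum = 2*n := by
  unfold conL
  rw [List.map_map, list_range_map_sum]
  have h1 : ∀ i : ℕ, ((fun f => f.ranges.length) ∘ conOp p q n w) i
      = ((List.range n).filter (fun k => p k = i)).length
        + ((List.range n).filter (fun k => q k = i)).length := by
    intro i
    simp [conOp]
  rw [Finset.sum_congr rfl (fun i _ => h1 i), Finset.sum_add_distrib,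
    sum_filter_count _ _ _ hp, sum_filter_count _ _ _ hq]
  omega

lemma conL_diff (p q : ℕ → ℕ) (n : ℕ) (u v : ℕ → ℤ) (w : List ℤ)
    (hpq : ∀ k < n, p k < q k ∧ q k < w.length ∧ w.getD (p k) 0 = u (k+1)
      ∧ w.getD (q k) 0 = v (k+1)) :
    IsDiffUnionAsg (scsAlpha n) (conL p q n w) (scsBS n) (scsBT n u v) := by
  funext j
  obtain ⟨k, r, hr5, hm⟩ : ∃ k r, r < 5 ∧ (j:ℕ) = 5*k+r := ⟨(j:ℕ)/5, (j:ℕ)%5, by omega, by omega⟩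
  have hmlt : (j:ℕ) < 5*n+2 := j.2
  have hj : j = ⟨5*k+r, by omega⟩ := Fin.ext (by simp [hm])
  rw [hj]
  rcases (by omega : r ≤ 1 ∨ r = 2 ∨ r = 3 ∨ r = 4) with hc | hc | hc | hc
  · -- separator keys: untouched
    have hkn : k ≤ n := by omega
    have hα : scsAlpha n ⟨5*k+r, by omega⟩ = 4*(k:ℤ) := alpha_eval_sep n k r hc (by omega)
    rw [applyOps_eq_self _ _ _ _ ?_, bt_eval_sep n u v k r hc (by omega)]
    intro f hf
    rw [hα]
    obtain ⟨i, _, rfl⟩ := List.mem_map.1 hf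
    rw [conOp_cond]
    rintro (⟨k', _, _, h1, h2⟩ | ⟨k', _, _, h1⟩) <;> omega
  · -- r = 2 : last coverer is p k
    subst hc
    have hkn : k < n := by omega
    obtain ⟨hpq1, hpq2, hpq3, hpq4⟩ := hpq k hkn
    have hα : scsAlpha n ⟨5*k+2, by omega⟩ = 4*(k:ℤ)+1 := by
      have h := alpha_eval n k 2 (by norm_num) (by norm_num) (by omega)
      rw [h]; push_cast; ring
    have hplen : p k < (conL p q n w).length := by rw [conL_length]; omega
    rw [applyOps_getLast _ _ _ _ (p k) hplen ?_ ?_]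
    · rw [conL_get, bt_eval n u v k 2 (by norm_num) (by norm_num) (by omega)]
      norm_num [conOp]
      exact_mod_cast (List.getD_eq_getElem?_getD .. ▸ hpq3)
    · rw [conL_get, hα, conOp_cond]
      exact Or.inl ⟨k, hkn, rfl, by omega, by omega⟩
    · intro i hi hgt
      rw [conL_get, hα, conOp_cond]
      rintro (⟨k', hk', hpk', h1, h2⟩ | ⟨k', hk', hqk', h1⟩)
      · have hk'k : k' = k := by omega
        subst hk'k
        omega
      · omega
  · -- r = 3 : last coverer is q k
    subst hc
    have hkn : k < n := by omega
    obtain ⟨hpq1, hpq2, hpq3, hpq4⟩ := hpq k hkn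
    have hα : scsAlpha n ⟨5*k+3, by omega⟩ = 4*(k:ℤ)+2 := by
      have h := alpha_eval n k 3 (by norm_num) (by norm_num) (by omega)
      rw [h]; push_cast; ring
    have hqlen : q k < (conL p q n w).length := by rw [conL_length]; omega
    rw [applyOps_getLast _ _ _ _ (q k) hqlen ?_ ?_]
    · rw [conL_get, bt_eval n u v k 3 (by norm_num) (by norm_num) (by omega)]
      norm_num [conOp]
      exact_mod_cast (List.getD_eq_getElem?_getD .. ▸ hpq4)
    · rw [conL_get, hα, conOp_cond]
      exact Or.inr ⟨k, hkn, rfl, by omega⟩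
    · intro i hi hgt
      rw [conL_get, hα, conOp_cond]
      rintro (⟨k', hk', hpk', h1, h2⟩ | ⟨k', hk', hqk', h1⟩)
      · have hk'k : k' = k := by omega
        subst hk'k
        omega
      · have hk'k : k' = k := by omega
        subst hk'k
        omega
  · -- r = 4 : last coverer is p k
    subst hc
    have hkn : k < n := by omega
    obtain ⟨hpq1, hpq2, hpq3, hpq4⟩ := hpq k hkn
    have hα : scsAlpha n ⟨5*k+4, by omega⟩ = 4*(k:ℤ)+3 := by
      have h := alpha_eval n k 4 (by norm_num) (by norm_num) (by omega)
      rw [h]; push_cast; ring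
    have hplen : p k < (conL p q n w).length := by rw [conL_length]; omega
    rw [applyOps_getLast _ _ _ _ (p k) hplen ?_ ?_]
    · rw [conL_get, bt_eval n u v k 4 (by norm_num) (by norm_num) (by omega)]
      norm_num [conOp]
      exact_mod_cast (List.getD_eq_getElem?_getD .. ▸ hpq3)
    · rw [conL_get, hα, conOp_cond]
      exact Or.inl ⟨k, hkn, rfl, by omega, by omega⟩
    · intro i hi hgt
      rw [conL_get, hα, conOp_cond]
      rintro (⟨k', hk', hpk', h1, h2⟩ | ⟨k', hk', hqk', h1⟩)
      · have hk'k : k' = k := by omega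
        subst hk'k
        omega
      · omega

end SCSP

/-- In the 2DistinctSCS instance, the strings `s_1, …, s_n` (where `s_k = u_k v_k`) have a
common supersequence of length at most `t` if and only if the best diff from the source
`B`-values to the target `B`-values under `F(U,←)`, with operation cost `κ₀ + κ₁·r` for
`κ₀ = 1` and `κ₁ = t + 99`, has cost at most `t + 2n(t+99)`. -/
theorem scs_supersequence_iff_best_diff_cost (n : ℕ) (u v : ℕ → ℤ)
    (hu : ∀ k, 1 ≤ k → k ≤ n → 0 < u k) (hv : ∀ k, 1 ≤ k → k ≤ n → 0 < v k)
    (huv : ∀ k, 1 ≤ k → k ≤ n → u k ≠ v k) (t : ℕ) :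
    (∃ w : List ℤ, w.length ≤ t ∧ ∀ k, 1 ≤ k → k ≤ n → [u k, v k].Sublist w) ↔
      ∃ L : List OpUnionAsg,
        IsBestDiffUnionAsg 1 (t + 99) (scsAlpha n) L (scsBS n) (scsBT n u v) ∧
        diffCostUnionAsg 1 (t + 99) L ≤ t + 2 * n * (t + 99) := by
  constructor
  · rintro ⟨w, hwlen, hsub⟩
    have hPQ : ∀ k : ℕ, ∃ pq : ℕ × ℕ, k < n →
        (pq.1 < pq.2 ∧ pq.2 < w.length ∧ w.getD pq.1 0 = u (k+1) ∧ w.getD pq.2 0 = v (k+1)) := by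
      intro k
      rcases Classical.em (k < n) with hk | hk
      · obtain ⟨i, j, hij, hj, ha, hb⟩ :=
          SCSP.exists_of_pair_sublist (hsub (k+1) (by omega) (by omega))
        exact ⟨(i, j), fun _ => ⟨hij, hj, ha, hb⟩⟩
      · exact ⟨(0,0), fun h => absurd h hk⟩
    choose pq hpq using hPQ
    have hpq' : ∀ k < n, (pq k).1 < (pq k).2 ∧ (pq k).2 < w.length ∧
        w.getD (pq k).1 0 = u (k+1) ∧ w.getD (pq k).2 0 = v (k+1) := fun k hk => hpq k hk
    set p : ℕ → ℕ := fun k => (pq k).1 with hp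
    set q : ℕ → ℕ := fun k => (pq k).2 with hq
    have hdiff0 := SCSP.conL_diff p q n u v w hpq'
    have hrsum := SCSP.conL_rsum p q n w
      (fun k hk => by have := hpq' k hk; simp only [hp]; omega)
      (fun k hk => (hpq' k hk).2.1)
    have hcost0 : diffCostUnionAsg 1 (t+99) (SCSP.conL p q n w) ≤ t + 2*n*(t+99) := by
      rw [SCSP.cost_eq, hrsum, SCSP.conL_length]
      have e : (t+99)*(2*n) = 2*n*(t+99) := by ring
      omega
    have hex : ∃ c : ℕ, ∃ L, IsDiffUnionAsg (scsAlpha n) L (scsBS n) (scsBT n u v) ∧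
        diffCostUnionAsg 1 (t+99) L = c := ⟨_, SCSP.conL p q n w, hdiff0, rfl⟩
    obtain ⟨Lb, hLb, hcb⟩ := Nat.find_spec hex
    refine ⟨Lb, ⟨hLb, fun L' hL' => ?_⟩, ?_⟩
    · rw [hcb]
      exact Nat.find_min' hex ⟨L', hL', rfl⟩
    · rw [hcb]
      exact le_trans (Nat.find_min' hex ⟨SCSP.conL p q n w, hdiff0, rfl⟩) hcost0
  · rintro ⟨L, ⟨hdiff, _⟩, hcost⟩
    have hsep : ∀ f ∈ L, ∀ k : ℕ, k ≤ n → ¬ f.cond (4*(k:ℤ)) :=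
      fun f hf k hk => SCSP.diff_no_sep n u v L hdiff f hf k hk
    have hrc := SCSP.tc_sum_le_rc n L hsep
    have htclb : ∀ k < n, 2 ≤ SCSP.tc L k := fun k hk =>
      SCSP.block_tc_two_le n u v L hdiff k hk (hu (k+1) (by omega) (by omega))
        (hv (k+1) (by omega) (by omega)) (huv (k+1) (by omega) (by omega))
    have hsum2 : 2*n ≤ ∑ k ∈ Finset.range n, SCSP.tc L k := by
      calc 2*n = ∑ _k ∈ Finset.range n, 2 := by
            rw [Finset.sum_const, Finset.card_range, smul_eq_mul]; ring
        _ ≤ _ := Finset.sum_le_sum (fun k hk => htclb k (Finset.mem_range.1 hk))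
    have hcost' := SCSP.cost_eq (t+99) L
    set R := (L.map (fun f => f.ranges.length)).sum with hR
    have hmul : (t+99)*(2*n) ≤ (t+99)*R := Nat.mul_le_mul_left _ (le_trans hsum2 hrc)
    have e2 : 2*n*(t+99) = (t+99)*(2*n) := by ring
    have hlen : L.length ≤ t := by omega
    have hRle : R ≤ 2*n := by
      by_contra hR'
      have h5 : (t+99)*(2*n+1) ≤ (t+99)*R := Nat.mul_le_mul_left _ (by omega)
      have e : (t+99)*(2*n+1) = (t+99)*(2*n) + (t+99) := by ring
      omega
    have hsumle : ∑ k ∈ Finset.range n, SCSP.tc L k ≤ 2*n := le_trans hrc hRle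
    have htc2 : ∀ k < n, SCSP.tc L k ≤ 2 := by
      intro k hk
      by_contra h3
      have h3' : 3 ≤ SCSP.tc L k := by omega
      have hadd := Finset.add_sum_erase (Finset.range n) (SCSP.tc L) (Finset.mem_range.2 hk)
      have h4 : ∑ k' ∈ (Finset.range n).erase k, 2 ≤
          ∑ k' ∈ (Finset.range n).erase k, SCSP.tc L k' :=
        Finset.sum_le_sum (fun k' hk' => htclb k' (Finset.mem_range.1 (Finset.mem_of_mem_erase hk')))
      have hcard : ((Finset.range n).erase k).card = n - 1 := by
        rw [Finset.card_erase_of_mem (Finset.mem_range.2 hk), Finset.card_range]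
      rw [Finset.sum_const, hcard, smul_eq_mul] at h4
      omega
    refine ⟨L.map (fun f => round f.b), by simpa using hlen, ?_⟩
    intro k hk1 hkn
    obtain ⟨i, j, hij, hj, hbu, hbv⟩ := SCSP.block_struct n u v L hdiff (k-1) (by omega)
      (by rw [show k-1+1 = k by omega]; exact hu k hk1 hkn)
      (by rw [show k-1+1 = k by omega]; exact hv k hk1 hkn)
      (by rw [show k-1+1 = k by omega]; exact huv k hk1 hkn)
      (htc2 (k-1) (by omega))
    rw [show k-1+1 = k by omega] at hbu hbv
    set w : List ℤ := L.map (fun f => round f.b) with hw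
    have hwlen : w.length = L.length := by simp [hw]
    have hi' : i < L.length := by omega
    have hwi : w.getD i 0 = u k := by
      rw [List.getD_eq_getElem _ _ (by omega : i < w.length)]
      have h1 : w[i]'(by omega) = round ((L[i]'hi').b) := by
        simp [hw]
      rw [h1, show (L[i]'hi').b = ((u k : ℤ):ℝ) from hbu]
      exact round_intCast _
    have hwj : w.getD j 0 = v k := by
      rw [List.getD_eq_getElem _ _ (by omega : j < w.length)]
      have h1 : w[j]'(by omega) = round ((L[j]'hj).b) := by
        simp [hw]
      rw [h1, show (L[j]'hj).b = ((v k : ℤ):ℝ) from hbv]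
      exact round_intCast _
    have hs := SCSP.pair_sublist_of w i j hij (by omega)
    rwa [hwi, hwj] at hs
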